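/- Nash equilibrium characterization: a balanced pair (x, y) (i.e., 0 ≤ x ≤ r̂ ≤ y ≤ r_b with D x = S y) is a Nash equilibrium of the interdealer game if and only if x ≤ m_A(y) and y ≥ s_A(x). -/

import Mathlib

open Set

/-- Interdealer trade quantity `Q(x,y) = min (D x) (S y)`. -/
noncomputable def interQ (D S : ℝ → ℝ) (x y : ℝ) : ℝ := min (D x) (S y)

/-- Payoff of `BD_mm`. -/
noncomputable def piMM (D S : ℝ → ℝ) (x y : ℝ) : ℝ :=
  (1 / 2) * max (y - x) 0 * interQ D S x y - max (D x - interQ D S x y) 0 * x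

/-- Payoff of `BD_rm`. -/
noncomputable def piRM (D S : ℝ → ℝ) (x y : ℝ) : ℝ :=
  (1 / 2) * max (y - x) 0 * interQ D S x y - max (S y - interQ D S x y) 0 * y

/-- Nash equilibrium of the interdealer game. -/
def IsNash (D S : ℝ → ℝ) (rb x y : ℝ) : Prop :=
  0 ≤ x ∧ x ≤ y ∧ y ≤ rb ∧
  (∀ x' ∈ Set.Icc (0:ℝ) y, piMM D S x' y ≤ piMM D S x y) ∧
  (∀ y' ∈ Set.Icc x rb, piRM D S x y' ≤ piRM D S x y)

lemma deriv2_linmul (F : ℝ → ℝ) (U : Set ℝ) (hUo : IsOpen U) (hF : ContDiffOn ℝ 2 F U)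
    (α β : ℝ) (r : ℝ) (hr : r ∈ U) :
    deriv (deriv (fun s => (α * s + β) * F s)) r
      = (α * r + β) * deriv (deriv F) r + 2 * α * deriv F r := by
  have hF1 : DifferentiableOn ℝ F U := hF.differentiableOn (by norm_num)
  have hFd : ContDiffOn ℝ 1 (deriv F) U := hF.deriv_of_isOpen hUo (by norm_num)
  have hFd1 : DifferentiableOn ℝ (deriv F) U := hFd.differentiableOn (by norm_num)
  have key : ∀ s ∈ U, HasDerivAt (fun s => (α * s + β) * F s)
      (α * F s + (α * s + β) * deriv F s) s := by
    intro s hs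
    have h1 : HasDerivAt (fun s : ℝ => α * s + β) α s := by
      simpa using ((hasDerivAt_id s).const_mul α).add_const β
    have h2 : HasDerivAt F (deriv F s) s :=
      (hF1.differentiableAt (hUo.mem_nhds hs)).hasDerivAt
    exact h1.mul h2
  have heq : ∀ s ∈ U, deriv (fun s => (α * s + β) * F s) s
      = α * F s + (α * s + β) * deriv F s := fun s hs => (key s hs).deriv
  have hev : deriv (fun s => (α * s + β) * F s)
      =ᶠ[nhds r] (fun s => α * F s + (α * s + β) * deriv F s) := by
    filter_upwards [hUo.mem_nhds hr] with s hs using heq s hs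
  rw [hev.deriv_eq]
  have h1 : HasDerivAt (fun s => α * F s + (α * s + β) * deriv F s)
      (α * deriv F r + (α * deriv F r + (α * r + β) * deriv (deriv F) r)) r := by
    have hD1 : HasDerivAt F (deriv F r) r :=
      (hF1.differentiableAt (hUo.mem_nhds hr)).hasDerivAt
    have hD2 : HasDerivAt (deriv F) (deriv (deriv F) r) r :=
      (hFd1.differentiableAt (hUo.mem_nhds hr)).hasDerivAt
    have hl : HasDerivAt (fun s : ℝ => α * s + β) α r := by
      simpa using ((hasDerivAt_id r).const_mul α).add_const β
    exact (hD1.const_mul α).add (hl.mul hD2)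
  rw [h1.deriv]; ring

lemma concave_mono_le {a b m p q : ℝ} {g : ℝ → ℝ} (hg : ConcaveOn ℝ (Icc a b) g)
    (hm : m ∈ Icc a b) (hmax : ∀ r ∈ Icc a b, g r ≤ g m)
    (hp : p ∈ Icc a b) (hpq : p ≤ q) (hqm : q ≤ m) : g p ≤ g q := by
  rcases eq_or_lt_of_le hpq with h | hlt
  · rw [h]
  rcases eq_or_lt_of_le hqm with h | hqm'
  · exact h ▸ hmax p hp
  have hpm : p < m := hlt.trans hqm'
  set t : ℝ := (m - q) / (m - p) with ht
  set s : ℝ := (q - p) / (m - p) with hs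
  have hmp : (0:ℝ) < m - p := by linarith
  have ht0 : 0 ≤ t := by apply div_nonneg <;> linarith
  have hs0 : 0 ≤ s := by apply div_nonneg <;> linarith
  have hts : t + s = 1 := by rw [ht, hs, ← add_div, div_eq_one_iff_eq hmp.ne']; ring
  have hcomb : t • p + s • m = q := by
    rw [smul_eq_mul, smul_eq_mul, ht, hs, div_mul_eq_mul_div, div_mul_eq_mul_div,
      ← add_div, div_eq_iff hmp.ne']
    ring
  have hkey := hg.2 hp hm ht0 hs0 hts
  rw [hcomb] at hkey
  simp only [smul_eq_mul] at hkey
  have hgm : g p ≤ g m := hmax p hp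
  have h1 : s * g p ≤ s * g m := mul_le_mul_of_nonneg_left hgm hs0
  have h2 : (t + s) * g p = g p := by rw [hts]; ring
  nlinarith

lemma concave_anti_le {a b m p q : ℝ} {g : ℝ → ℝ} (hg : ConcaveOn ℝ (Icc a b) g)
    (hm : m ∈ Icc a b) (hmax : ∀ r ∈ Icc a b, g r ≤ g m)
    (hp : p ∈ Icc a b) (hqp : q ≤ p) (hmq : m ≤ q) : g p ≤ g q := by
  rcases eq_or_lt_of_le hqp with h | hlt
  · rw [h]
  rcases eq_or_lt_of_le hmq with h | hmq'
  · exact h ▸ hmax p hp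
  have hmp : m < p := hmq'.trans hlt
  set t : ℝ := (q - m) / (p - m) with ht
  set s : ℝ := (p - q) / (p - m) with hs
  have hpm : (0:ℝ) < p - m := by linarith
  have ht0 : 0 ≤ t := by apply div_nonneg <;> linarith
  have hs0 : 0 ≤ s := by apply div_nonneg <;> linarith
  have hts : t + s = 1 := by rw [ht, hs, ← add_div, div_eq_one_iff_eq hpm.ne']; ring
  have hcomb : t • p + s • m = q := by
    rw [smul_eq_mul, smul_eq_mul, ht, hs, div_mul_eq_mul_div, div_mul_eq_mul_div,
      ← add_div, div_eq_iff hpm.ne']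
    ring
  have hkey := hg.2 hp hm ht0 hs0 hts
  rw [hcomb] at hkey
  simp only [smul_eq_mul] at hkey
  have hgm : g p ≤ g m := hmax p hp
  have h1 : t * g p ≤ t * g m := mul_le_mul_of_nonneg_left hgm ht0
  have h2 : (t + s) * g p = g p := by rw [hts]; ring
  nlinarith

/-- Nash equilibrium characterization: a balanced pair `(x, y)` is a Nash equilibrium
iff `x ≤ m_A(y)` and `y ≥ s_A(x)`. -/
theorem nash_characterization
    (rhat rb Tmax : ℝ) (D S mA sA : ℝ → ℝ)
    (hrhat : 0 < rhat) (hrb : rhat < rb) (hTmax : 0 < Tmax)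
    (hDc : ContinuousOn D (Icc 0 rb)) (hDm : StrictMonoOn D (Icc 0 rb))
    (hD0 : D 0 = 0) (hDr : D rhat = Tmax)
    (hSc : ContinuousOn S (Icc 0 rb)) (hSa : StrictAntiOn S (Icc 0 rb))
    (hSb : S rb = 0) (hSr : S rhat = Tmax)
    (U : Set ℝ) (hUo : IsOpen U) (hU : Icc (0:ℝ) rb ⊆ U)
    (hD2 : ContDiffOn ℝ 2 D U) (hS2 : ContDiffOn ℝ 2 S U)
    (hD' : ∀ x ∈ Icc (0:ℝ) rb, 0 < deriv D x)
    (hD'' : ∀ x ∈ Icc (0:ℝ) rb, deriv (deriv D) x < 0)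
    (hS' : ∀ x ∈ Icc (0:ℝ) rb, deriv S x < 0)
    (hS'' : ∀ x ∈ Icc (0:ℝ) rb, deriv (deriv S) x < 0)
    (hmA : ∀ y ∈ Ioc (0:ℝ) rb, mA y ∈ Icc (0:ℝ) y ∧
      (∀ r ∈ Icc (0:ℝ) y, (y - r) * D r ≤ (y - mA y) * D (mA y)) ∧
      (∀ m ∈ Icc (0:ℝ) y,
        (∀ r ∈ Icc (0:ℝ) y, (y - r) * D r ≤ (y - m) * D m) → m = mA y))
    (hsA : ∀ x ∈ Ico (0:ℝ) rb, sA x ∈ Icc x rb ∧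
      (∀ r ∈ Icc x rb, (r - x) * S r ≤ (sA x - x) * S (sA x)) ∧
      (∀ m ∈ Icc x rb,
        (∀ r ∈ Icc x rb, (r - x) * S r ≤ (m - x) * S m) → m = sA x)) :
    ∀ x y, 0 ≤ x → x ≤ rhat → rhat ≤ y → y ≤ rb → D x = S y →
      (IsNash D S rb x y ↔ (x ≤ mA y ∧ sA x ≤ y)) := by
  intro x y hx0 hxr hry hyb hbal
  have hxy : x ≤ y := hxr.trans hry
  have hy0 : 0 < y := hrhat.trans_le hry
  have hxb : x < rb := hxr.trans_lt hrb
  have hxmem : x ∈ Icc 0 rb := ⟨hx0, hxb.le⟩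
  have hymem : y ∈ Icc 0 rb := ⟨hy0.le, hyb⟩
  obtain ⟨hmAmem, hmAmax, hmAuniq⟩ := hmA y ⟨hy0, hyb⟩
  obtain ⟨hsAmem, hsAmax, hsAuniq⟩ := hsA x ⟨hx0, hxb⟩
  have hT0 : 0 ≤ D x := by
    rcases eq_or_lt_of_le hx0 with h | h
    · rw [← h, hD0]
    · rw [← hD0]
      exact (hDm ⟨le_refl 0, (hrhat.trans hrb).le⟩ hxmem h).le
  have hQ : interQ D S x y = D x := by
    rw [interQ, ← hbal, min_self]
  have hmaxyx : max (y - x) 0 = y - x := max_eq_left (by linarith)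
  have hpixy : piMM D S x y = 1 / 2 * ((y - x) * D x) := by
    rw [piMM, hQ, hmaxyx, sub_self]
    simp; ring
  have hpixyR : piRM D S x y = 1 / 2 * ((y - x) * D x) := by
    rw [piRM, hQ, hmaxyx]
    rw [show S y - D x = 0 by rw [hbal, sub_self]]
    simp; ring
  -- payoff formulas for deviations
  have M1 : ∀ x' ∈ Icc (0:ℝ) x, piMM D S x' y = 1 / 2 * ((y - x') * D x') := by
    rintro x' ⟨h0, hx'x⟩
    have hx'mem : x' ∈ Icc 0 rb := ⟨h0, hx'x.trans hxmem.2⟩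
    have hle : D x' ≤ D x := hDm.monotoneOn hx'mem hxmem hx'x
    have hQ' : interQ D S x' y = D x' := by
      rw [interQ, min_eq_left (by rw [← hbal]; exact hle)]
    rw [piMM, hQ', sub_self, max_eq_left (sub_nonneg.mpr (hx'x.trans hxy))]
    simp; ring
  have M2 : ∀ x' ∈ Icc (0:ℝ) y, x < x' → piMM D S x' y ≤ piMM D S x y := by
    rintro x' ⟨h0, hx'y⟩ hlt
    have hx'mem : x' ∈ Icc 0 rb := ⟨h0, hx'y.trans hyb⟩
    have hgt : D x < D x' := hDm hxmem hx'mem hlt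
    have hQ' : interQ D S x' y = D x := by
      rw [interQ, ← hbal]
      exact min_eq_right hgt.le
    rw [hpixy, piMM, hQ', max_eq_left (sub_nonneg.mpr hx'y),
      max_eq_left (by linarith)]
    have h1 : 0 ≤ (D x' - D x) * x' := mul_nonneg (by linarith) h0
    nlinarith [mul_le_mul_of_nonneg_right (by linarith : y - x' ≤ y - x) hT0]
  have R1 : ∀ y' ∈ Icc y rb, piRM D S x y' = 1 / 2 * ((y' - x) * S y') := by
    rintro y' ⟨hyy', hy'b⟩
    have hy'mem : y' ∈ Icc 0 rb := ⟨hy0.le.trans hyy', hy'b⟩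
    have hle : S y' ≤ S y := hSa.antitoneOn hymem hy'mem hyy'
    have hQ' : interQ D S x y' = S y' := by
      rw [interQ, min_eq_right (by rw [hbal]; exact hle)]
    rw [piRM, hQ', sub_self, max_eq_left (sub_nonneg.mpr (hxy.trans hyy'))]
    simp; ring
  have R2 : ∀ y' ∈ Icc x rb, y' < y → piRM D S x y' ≤ piRM D S x y := by
    rintro y' ⟨hxy', hy'b⟩ hlt
    have hy'0 : 0 ≤ y' := hx0.trans hxy'
    have hy'mem : y' ∈ Icc 0 rb := ⟨hy'0, hy'b⟩
    have hgt : S y < S y' := hSa hy'mem hymem hlt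
    have hQ' : interQ D S x y' = D x := by
      rw [interQ]
      exact min_eq_left (by rw [hbal]; exact hgt.le)
    rw [hpixyR, piRM, hQ', max_eq_left (sub_nonneg.mpr hxy'),
      max_eq_left (by rw [hbal]; linarith)]
    have h1 : 0 ≤ (S y' - D x) * y' := mul_nonneg (by rw [hbal]; linarith) hy'0
    have h2 : S y = D x := hbal.symm
    nlinarith [mul_le_mul_of_nonneg_right (by linarith : y' - x ≤ y - x) hT0]
  -- concavity of the two objective functions
  have hgconc : ConcaveOn ℝ (Icc 0 y) (fun r => (y - r) * D r) := by
    have heq : (fun r => (y - r) * D r) = (fun s => ((-1) * s + y) * D s) := by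
      funext s; ring
    rw [heq]
    refine (strictConcaveOn_of_deriv2_neg (convex_Icc 0 y) ?_ ?_).concaveOn
    · exact ((continuous_const.mul continuous_id).add continuous_const).continuousOn.mul
        (hDc.mono (Icc_subset_Icc le_rfl hyb))
    · intro r hr
      rw [interior_Icc] at hr
      have hrmem : r ∈ Icc 0 rb := ⟨hr.1.le, hr.2.le.trans hyb⟩
      have hrU : r ∈ U := hU hrmem
      show deriv (deriv _) r < 0
      rw [deriv2_linmul D U hUo hD2 (-1) y r hrU]
      nlinarith [hD' r hrmem, hD'' r hrmem, hr.2]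
  have hhconc : ConcaveOn ℝ (Icc x rb) (fun r => (r - x) * S r) := by
    have heq : (fun r => (r - x) * S r) = (fun s => (1 * s + -x) * S s) := by
      funext s; ring
    rw [heq]
    refine (strictConcaveOn_of_deriv2_neg (convex_Icc x rb) ?_ ?_).concaveOn
    · exact ((continuous_const.mul continuous_id).add continuous_const).continuousOn.mul
        (hSc.mono (Icc_subset_Icc hx0 le_rfl))
    · intro r hr
      rw [interior_Icc] at hr
      have hrmem : r ∈ Icc 0 rb := ⟨hx0.trans hr.1.le, hr.2.le⟩
      have hrU : r ∈ U := hU hrmem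
      show deriv (deriv _) r < 0
      rw [deriv2_linmul S U hUo hS2 1 (-x) r hrU]
      nlinarith [hS' r hrmem, hS'' r hrmem, hr.1]
  constructor
  · rintro ⟨-, -, -, hM, hR⟩
    constructor
    · by_contra hcon
      push_neg at hcon
      have h1 := M1 (mA y) ⟨hmAmem.1, hcon.le⟩
      have h2 := hM (mA y) hmAmem
      rw [h1, hpixy] at h2
      have h3 := hmAmax x ⟨hx0, hxy⟩
      have h4 : (y - x) * D x = (y - mA y) * D (mA y) := by
        linarith
      have h5 : x = mA y :=
        hmAuniq x ⟨hx0, hxy⟩ (fun r hr => (hmAmax r hr).trans h4.ge)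
      linarith
    · by_contra hcon
      push_neg at hcon
      have h1 := R1 (sA x) ⟨hcon.le, hsAmem.2⟩
      have h2 := hR (sA x) hsAmem
      rw [h1, hpixyR] at h2
      have h3 := hsAmax y ⟨hxy, hyb⟩
      have h4 : (y - x) * S y = (sA x - x) * S (sA x) := by
        rw [hbal] at h2; linarith
      have h5 : y = sA x :=
        hsAuniq y ⟨hxy, hyb⟩ (fun r hr => (hsAmax r hr).trans h4.ge)
      linarith
  · rintro ⟨hxm, hsy⟩
    refine ⟨hx0, hxy, hyb, ?_, ?_⟩
    · intro x' hx'
      rcases le_or_gt x' x with h | h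
      · rw [M1 x' ⟨hx'.1, h⟩, hpixy]
        have hkey : (y - x') * D x' ≤ (y - x) * D x := concave_mono_le hgconc hmAmem hmAmax
          (p := x') (q := x) ⟨hx'.1, hx'.2⟩ h hxm
        linarith
      · exact M2 x' hx' h
    · intro y' hy'
      rcases le_or_gt y y' with h | h
      · rw [R1 y' ⟨h, hy'.2⟩, hpixyR, hbal]
        have hkey : (y' - x) * S y' ≤ (y - x) * S y := concave_anti_le hhconc hsAmem hsAmax
          (p := y') (q := y) hy' h hsy
        linarith
      · exact R2 y' hy' h
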